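/- If the feasible region P(A,b) is a full-dimensional bounded polytope, then the group of linear automorphisms of LP(A,b,c) is finite. -/

import Mathlib

open Matrix

section Aux

variable {m n : ℕ}

/-- Linear functional given by dot product with `d` on the right. -/
private def dotR (d : Fin n → ℝ) : (Fin n → ℝ) →ₗ[ℝ] ℝ where
  toFun v := v ⬝ᵥ d
  map_add' u v := add_dotProduct u v d
  map_smul' r v := smul_dotProduct r v d

private lemma dual_as_dot (f : Module.Dual ℝ (Fin n → ℝ)) :
    ∃ d : Fin n → ℝ, (∀ v, f v = v ⬝ᵥ d) := by
  refine ⟨fun j => f (fun k => if j = k then 1 else 0), fun v => ?_⟩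
  conv_lhs => rw [pi_eq_sum_univ v]
  rw [map_sum]
  simp [dotProduct, smul_eq_mul]

/-- At an extreme point, the tight rows span the whole space. -/
private lemma tight_span (A : Matrix (Fin m) (Fin n) ℝ) (b : Fin m → ℝ)
    {x : Fin n → ℝ}
    (hx : x ∈ Set.extremePoints ℝ {y | A.mulVec y ≤ b}) :
    Submodule.span ℝ (A '' {i | A i ⬝ᵥ x = b i}) = ⊤ := by
  by_contra hne
  obtain ⟨f, hf0, hfbot⟩ := Submodule.exists_dual_map_eq_bot_of_lt_top
    (lt_top_iff_ne_top.2 hne) inferInstance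
  obtain ⟨d, hfd⟩ := dual_as_dot f
  have hd0 : d ≠ 0 := by
    intro h
    apply hf0
    apply LinearMap.ext
    intro v
    rw [hfd]
    simp [h]
  -- tight rows are orthogonal to d
  have htight : ∀ i, A i ⬝ᵥ x = b i → A i ⬝ᵥ d = 0 := by
    intro i hi
    have hmem : A i ∈ Submodule.span ℝ (A '' {i | A i ⬝ᵥ x = b i}) :=
      Submodule.subset_span ⟨i, hi, rfl⟩
    have : f (A i) ∈ Submodule.map f (Submodule.span ℝ (A '' {i | A i ⬝ᵥ x = b i})) :=
      Submodule.mem_map_of_mem hmem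
    rw [hfbot] at this
    simpa [hfd] using this
  have hxP : A.mulVec x ≤ b := hx.1
  -- choose a small ε > 0
  set g : Fin m → ℝ := fun i =>
    if A i ⬝ᵥ x = b i then 1 else (b i - A i ⬝ᵥ x) / (|A i ⬝ᵥ d| + 1) with hg
  have hgpos : ∀ i, 0 < g i := by
    intro i
    by_cases hi : A i ⬝ᵥ x = b i
    · simp [hg, hi]
    · have h1 : A i ⬝ᵥ x < b i := lt_of_le_of_ne (hxP i) hi
      have h2 : (0:ℝ) < |A i ⬝ᵥ d| + 1 := by positivity
      simp only [hg, hi, if_false]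
      exact div_pos (by linarith) h2
  set s : Finset ℝ := insert 1 (Finset.image g Finset.univ) with hs
  have hsne : s.Nonempty := ⟨1, by simp [hs]⟩
  set ε : ℝ := s.min' hsne with hε
  have hall : ∀ r ∈ s, 0 < r := by
    intro r hr
    rcases Finset.mem_insert.1 hr with h | h
    · rw [h]; norm_num
    · obtain ⟨i, _, hi⟩ := Finset.mem_image.1 h
      rw [← hi]; exact hgpos i
  have hε0 : 0 < ε := hall _ (s.min'_mem hsne)
  have hεle : ∀ i, ¬ (A i ⬝ᵥ x = b i) → ε * (|A i ⬝ᵥ d| + 1) ≤ b i - A i ⬝ᵥ x := by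
    intro i hi
    have h1 : ε ≤ g i := by
      apply Finset.min'_le
      rw [hs]
      exact Finset.mem_insert_of_mem (Finset.mem_image_of_mem g (Finset.mem_univ i))
    have h2 : (0:ℝ) < |A i ⬝ᵥ d| + 1 := by positivity
    have h3 : g i = (b i - A i ⬝ᵥ x) / (|A i ⬝ᵥ d| + 1) := by simp [hg, hi]
    rw [h3] at h1
    calc ε * (|A i ⬝ᵥ d| + 1) ≤ ((b i - A i ⬝ᵥ x) / (|A i ⬝ᵥ d| + 1)) * (|A i ⬝ᵥ d| + 1) := by
          apply mul_le_mul_of_nonneg_right h1 (le_of_lt h2)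
      _ = b i - A i ⬝ᵥ x := by field_simp
  -- both x ± ε • d are feasible
  have hmemP : ∀ t : ℝ, |t| ≤ ε → x + t • d ∈ {y | A.mulVec y ≤ b} := by
    intro t ht
    rw [Set.mem_setOf_eq, Pi.le_def]
    intro i
    have hval : A.mulVec (x + t • d) i = A i ⬝ᵥ x + t * (A i ⬝ᵥ d) := by
      simp [mulVec, dotProduct_add, dotProduct_smul, smul_eq_mul]
    rw [hval]
    by_cases hi : A i ⬝ᵥ x = b i
    · rw [htight i hi, hi]; ring_nf; exact le_refl _
    · have h1 := hεle i hi
      have h2 : t * (A i ⬝ᵥ d) ≤ |t| * |A i ⬝ᵥ d| := by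
        calc t * (A i ⬝ᵥ d) ≤ |t * (A i ⬝ᵥ d)| := le_abs_self _
          _ = |t| * |A i ⬝ᵥ d| := abs_mul _ _
      have h3 : |t| * |A i ⬝ᵥ d| ≤ ε * (|A i ⬝ᵥ d| + 1) := by
        have := abs_nonneg (A i ⬝ᵥ d)
        nlinarith [abs_nonneg t]
      linarith
  have hp : x + ε • d ∈ {y | A.mulVec y ≤ b} := hmemP ε (by rw [abs_of_pos hε0])
  have hm : x + (-ε) • d ∈ {y | A.mulVec y ≤ b} := hmemP (-ε) (by rw [abs_neg, abs_of_pos hε0])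
  have hseg : x ∈ openSegment ℝ (x + (-ε) • d) (x + ε • d) := by
    refine ⟨1/2, 1/2, by norm_num, by norm_num, by norm_num, ?_⟩
    module
  have := hx.2 hm hp hseg
  have hεd : (-ε) • d = 0 := by
    have : x + (-ε) • d = x + 0 := by rw [this, add_zero]
    exact add_left_cancel this
  rcases smul_eq_zero.1 hεd with h | h
  · exact absurd h (by simpa using ne_of_gt hε0)
  · exact hd0 h

/-- A polyhedron has finitely many extreme points. -/
private lemma extremePoints_finite (A : Matrix (Fin m) (Fin n) ℝ) (b : Fin m → ℝ) :
    (Set.extremePoints ℝ {y | A.mulVec y ≤ b}).Finite := by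
  have hinj : Set.InjOn (fun x => {i | A i ⬝ᵥ x = b i})
      (Set.extremePoints ℝ {y | A.mulVec y ≤ b}) := by
    intro x hx y hy hxy
    have hspan := tight_span A b hx
    have hker : Submodule.span ℝ (A '' {i | A i ⬝ᵥ x = b i}) ≤ LinearMap.ker (dotR (x - y)) := by
      rw [Submodule.span_le]
      rintro _ ⟨i, hi, rfl⟩
      have h' : {i | A i ⬝ᵥ x = b i} = {i | A i ⬝ᵥ y = b i} := hxy
      have hiy : i ∈ {i | A i ⬝ᵥ y = b i} := h' ▸ hi
      have hiy' : A i ⬝ᵥ y = b i := hiy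
      simp only [SetLike.mem_coe, LinearMap.mem_ker]
      show A i ⬝ᵥ (x - y) = 0
      rw [dotProduct_sub, hi, hiy', sub_self]
    have hxy0 : (x - y) ⬝ᵥ (x - y) = 0 := by
      have : x - y ∈ LinearMap.ker (dotR (x - y)) := by
        apply hker
        rw [hspan]; trivial
      exact this
    exact sub_eq_zero.1 (dotProduct_self_eq_zero.1 hxy0)
  exact Set.Finite.of_finite_image (Set.toFinite _) hinj

end Aux

/-- If the feasible region `P(A,b)` is a full-dimensional bounded polytope, then
the group of linear automorphisms of `LP(A,b,c)` (linear transformations in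
`GL_n(ℝ)` permuting the constraint hyperplane arrangement, leaving `P(A,b)`
invariant, and preserving the objective value on feasible points) is finite. -/
theorem automorphism_group_finite
    (m n : ℕ) (A : Matrix (Fin m) (Fin n) ℝ) (b : Fin m → ℝ) (c : Fin n → ℝ)
    (hrows : ∀ i, A i ≠ 0)
    (P : Set (Fin n → ℝ)) (hP : P = {x | A.mulVec x ≤ b})
    (H : Fin m → Set (Fin n → ℝ)) (hH : ∀ i, H i = {x | A i ⬝ᵥ x = b i})
    (hbdd : Bornology.IsBounded P) (hfull : affineSpan ℝ P = ⊤) :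
    {γ : GL (Fin n) ℝ |
        (∀ i, ∃ j, (fun x => γ.val.mulVec x) '' H i = H j) ∧
        (fun x => γ.val.mulVec x) '' P = P ∧
        (∀ x ∈ P, c ⬝ᵥ γ.val.mulVec x = c ⬝ᵥ x)}.Finite := by
  subst hP
  set Q : Set (Fin n → ℝ) := {x | A.mulVec x ≤ b} with hQ
  set E : Set (Fin n → ℝ) := Set.extremePoints ℝ Q with hEdef
  have hEfin : E.Finite := extremePoints_finite A b
  -- Q is closed
  have hclosed : IsClosed Q := by
    have h1 : Q = ⋂ i, {x : Fin n → ℝ | A.mulVec x i ≤ b i} := by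
      ext x
      simp [hQ, Pi.le_def, Set.mem_iInter]
    rw [h1]
    refine isClosed_iInter fun i => ?_
    have hcont : Continuous fun x : Fin n → ℝ => A.mulVec x i := by
      simp only [mulVec, dotProduct]
      exact continuous_finset_sum _ fun j _ => continuous_const.mul (continuous_apply j)
    exact isClosed_le hcont continuous_const
  -- Q is convex
  have hconv : Convex ℝ Q := by
    intro x hx y hy a a' ha ha' haa
    rw [hQ, Set.mem_setOf_eq, Pi.le_def]
    intro i
    have h1 : A.mulVec (a • x + a' • y) i = a * A.mulVec x i + a' * A.mulVec y i := by
      rw [mulVec_add, mulVec_smul, mulVec_smul]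
      rfl
    rw [h1]
    have hx' : A.mulVec x i ≤ b i := hx i
    have hy' : A.mulVec y i ≤ b i := hy i
    have hb : a * b i + a' * b i = b i := by rw [← add_mul, haa, one_mul]
    have h2 := mul_le_mul_of_nonneg_left hx' ha
    have h3 := mul_le_mul_of_nonneg_left hy' ha'
    linarith
  have hcompact : IsCompact Q := Metric.isCompact_iff_isClosed_bounded.2 ⟨hclosed, hbdd⟩
  have hKM : closure (convexHull ℝ E) = Q := closure_convexHull_extremePoints hcompact hconv
  -- E affinely spans everything
  have haffE : affineSpan ℝ E = ⊤ := by
    rw [eq_top_iff, ← hfull]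
    rw [affineSpan_le]
    rw [← hKM]
    exact closure_minimal (convexHull_subset_affineSpan E)
      (affineSpan ℝ E).closed_of_finiteDimensional
  -- hence E spans everything as a submodule
  have hspanE : Submodule.span ℝ E = ⊤ := by
    rw [eq_top_iff]
    intro z _
    have hz : z ∈ affineSpan ℝ E := by rw [haffE]; trivial
    have hle : affineSpan ℝ E ≤ (Submodule.span ℝ E).toAffineSubspace := by
      rw [affineSpan_le]
      exact Submodule.subset_span
    exact hle hz
  -- automorphisms preserve E
  have key : ∀ γ : GL (Fin n) ℝ, (fun x => γ.val.mulVec x) '' Q = Q →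
      ∀ v ∈ E, γ.val.mulVec v ∈ E := by
    intro γ hγ v hv
    set e : (Fin n → ℝ) ≃ₗ[ℝ] (Fin n → ℝ) :=
      (Matrix.GeneralLinearGroup.toLin γ).toLinearEquiv with he
    have hecoe : ⇑e = fun x => γ.val.mulVec x := by
      funext x
      rw [he]; rfl
    have himg : e '' E = E := by
      rw [hEdef, image_extremePoints e Q, hecoe, hγ]
    have : e v ∈ e '' E := Set.mem_image_of_mem e hv
    rw [himg, hecoe] at this
    exact this
  set S : Set (GL (Fin n) ℝ) := {γ : GL (Fin n) ℝ |
      (∀ i, ∃ j, (fun x => γ.val.mulVec x) '' H i = H j) ∧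
      (fun x => γ.val.mulVec x) '' Q = Q ∧
      (∀ x ∈ Q, c ⬝ᵥ γ.val.mulVec x = c ⬝ᵥ x)} with hS
  have hfinE : Finite ↥E := hEfin.to_subtype
  have hfinS : Finite ↥S := by
    let F : ↥S → (↥E → ↥E) := fun γ v =>
      ⟨γ.1.val.mulVec v.1, key γ.1 γ.2.2.1 v.1 v.2⟩
    have hFinj : Function.Injective F := by
      intro γ₁ γ₂ h
      have hvals : ∀ v ∈ E, γ₁.1.val.mulVec v = γ₂.1.val.mulVec v := by
        intro v hv
        exact congrArg Subtype.val (congrFun h ⟨v, hv⟩)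
      have hlin : γ₁.1.val.mulVecLin = γ₂.1.val.mulVecLin := by
        apply LinearMap.ext_on hspanE
        intro v hv
        simpa [Matrix.mulVecLin_apply] using hvals v hv
      have hmv : ∀ v, γ₁.1.val.mulVec v = γ₂.1.val.mulVec v := by
        intro v
        have := LinearMap.congr_fun hlin v
        simpa [Matrix.mulVecLin_apply] using this
      have hmat : γ₁.1.val = γ₂.1.val := by
        ext i j
        have := congrFun (hmv (Pi.single j 1)) i
        simpa [Matrix.mulVec_single_one] using this
      exact Subtype.ext (Units.ext hmat)
    exact Finite.of_injective F hFinj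
  exact Set.finite_coe_iff.1 hfinS
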